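/- Suppose Assumptions 1, 2, and 3 hold, λ ≥ 1, λ < λ̄, and additionally lim_{K→0⁺} F(K,1)/K = ∞ (Inada condition at zero). Then the equilibrium dynamics has a steady state: there exist K > 0 and z̄ with Φ(z̄) > 1 − 1/λ such that K = βλ·W(K,z̄)·∫_{z̄}^∞ z dΦ(z) and z̄ = (P(K,z̄) + F_X(K,1))/(F_K(K,1)·P(K,z̄)). (Proposition 2, part 1: existence of a steady state when leverage is below the threshold.) -/

import Mathlib

open Filter Topology MeasureTheory

/-- **Assumption 1.** `Φ` (the law `μ` of productivity) is an absolutely continuous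
cdf on `[0,∞)` with `Φ(z) < 1` for all `z` and a finite mean. -/
structure Assumption1 (μ : Measure ℝ) : Prop where
  prob : IsProbabilityMeasure μ
  supp : μ (Set.Iio 0) = 0
  absCont : μ ≪ MeasureTheory.volume
  lt_one : ∀ z : ℝ, μ (Set.Iic z) < 1
  finite_mean : Integrable id μ

/-- The cdf `Φ` of the productivity distribution `μ`. -/
noncomputable def Phi (μ : Measure ℝ) (z : ℝ) : ℝ := (μ (Set.Iic z)).toReal

/-- **Assumption 2.** `F` is homogeneous of degree one, concave, continuously
differentiable with positive marginal products `FK`, `FX`, and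
`F(K,1)/K → m`, `F_K(K,1) → m` as `K → ∞` with `m > 0`. -/
structure Assumption2 (F FK FX : ℝ → ℝ → ℝ) (m : ℝ) : Prop where
  pos : ∀ K X : ℝ, 0 < K → 0 < X → 0 < F K X
  homog : ∀ c K X : ℝ, 0 < c → 0 < K → 0 < X → F (c * K) (c * X) = c * F K X
  concave : ConcaveOn ℝ (Set.Ioi 0 ×ˢ Set.Ioi 0) (fun p : ℝ × ℝ => F p.1 p.2)
  hFK : ∀ K X : ℝ, 0 < K → 0 < X → HasDerivAt (fun k => F k X) (FK K X) K
  hFX : ∀ K X : ℝ, 0 < K → 0 < X → HasDerivAt (fun x => F K x) (FX K X) X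
  FK_pos : ∀ K X : ℝ, 0 < K → 0 < X → 0 < FK K X
  FX_pos : ∀ K X : ℝ, 0 < K → 0 < X → 0 < FX K X
  FK_cont : ContinuousOn (fun p : ℝ × ℝ => FK p.1 p.2) (Set.Ioi 0 ×ˢ Set.Ioi 0)
  FX_cont : ContinuousOn (fun p : ℝ × ℝ => FX p.1 p.2) (Set.Ioi 0 ×ˢ Set.Ioi 0)
  m_pos : 0 < m
  lim_avg : Filter.Tendsto (fun K => F K 1 / K) Filter.atTop (nhds m)
  lim_FK : Filter.Tendsto (fun K => FK K 1) Filter.atTop (nhds m)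

/-- The leverage threshold `λ̄ = ((1−β)/β)·(∫ max{mz−1, 0} dΦ(z))⁻¹`. -/
noncomputable def lamBar (β m : ℝ) (μ : Measure ℝ) : ℝ :=
  ((1 - β) / β) * (∫ z, max (m * z - 1) 0 ∂μ)⁻¹

/-- Aggregate wealth `W(K, z̄)` as a function of capital and the investment threshold. -/
noncomputable def Wfun (μ : Measure ℝ) (β lam : ℝ) (F : ℝ → ℝ → ℝ) (K zb : ℝ) : ℝ :=
  F K 1 / (1 - β * (lam * Phi μ zb + 1 - lam))

/-- Land price `P(K, z̄)` as a function of capital and the investment threshold. -/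
noncomputable def Pfun (μ : Measure ℝ) (β lam : ℝ) (F : ℝ → ℝ → ℝ) (K zb : ℝ) : ℝ :=
  β * (lam * Phi μ zb + 1 - lam) * F K 1 / (1 - β * (lam * Phi μ zb + 1 - lam))


section Aux
open Filter Topology MeasureTheory Set
open scoped ENNReal

lemma cdf_mono (ν : Measure ℝ) [IsFiniteMeasure ν] :
    Monotone fun z => (ν (Set.Iic z)).toReal := fun a b hab =>
  ENNReal.toReal_mono (measure_ne_top _ _) (measure_mono (Iic_subset_Iic.2 hab))

lemma cdf_cont (ν : Measure ℝ) [IsFiniteMeasure ν] (hν : ∀ x : ℝ, ν {x} = 0) :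
    Continuous fun z => (ν (Set.Iic z)).toReal := by
  have mono := cdf_mono ν
  rw [continuous_iff_continuousAt]
  intro a
  have hd : ∀ n : ℕ, (0:ℝ) < 1/(n+1) := fun n => by positivity
  apply continuousAt_iff_continuous_left_right.2
  constructor
  · -- left
    have hIio : ν (Set.Iio a) = ν (Set.Iic a) := by
      refine le_antisymm (measure_mono Iio_subset_Iic_self) ?_
      calc ν (Set.Iic a) = ν (Set.Iio a ∪ {a}) := by rw [Set.Iio_union_right]
        _ ≤ ν (Set.Iio a) + ν {a} := measure_union_le _ _
        _ = ν (Set.Iio a) := by rw [hν a, add_zero]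
    have hU : (⋃ n : ℕ, Set.Iic (a - 1/(n+1))) = Set.Iio a := by
      ext z
      simp only [mem_iUnion, mem_Iic, mem_Iio]
      constructor
      · rintro ⟨n, hn⟩; exact lt_of_le_of_lt hn (by linarith [hd n])
      · intro hz
        obtain ⟨n, hn⟩ := exists_nat_one_div_lt (sub_pos.2 hz)
        exact ⟨n, by push_cast at hn ⊢; linarith⟩
    have hm : Monotone fun n : ℕ => Set.Iic (a - 1/(n+1)) := by
      intro n k hnk
      apply Iic_subset_Iic.2
      have : (1:ℝ)/(k+1) ≤ 1/(n+1) := by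
        apply one_div_le_one_div_of_le (by positivity)
        push_cast; exact_mod_cast by exact_mod_cast Nat.add_le_add_right hnk 1
      linarith
    have hl := tendsto_measure_iUnion_atTop (μ := ν) hm
    rw [hU, hIio] at hl
    have hl' : Tendsto (fun n : ℕ => (ν (Set.Iic (a - 1/(n+1)))).toReal) atTop
        (𝓝 ((ν (Set.Iic a)).toReal)) :=
      (ENNReal.tendsto_toReal (measure_ne_top ν _)).comp hl
    rw [ContinuousWithinAt]
    apply tendsto_order.2
    constructor
    · intro b hb
      obtain ⟨n, hn⟩ := (hl'.eventually (eventually_gt_nhds hb)).exists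
      filter_upwards [Ioc_mem_nhdsLE_of_mem (⟨by linarith [hd n], le_refl a⟩ :
        a ∈ Set.Ioc (a - 1/(n+1)) a)] with z hz
      exact lt_of_lt_of_le hn (mono hz.1.le)
    · intro b hb
      filter_upwards [self_mem_nhdsWithin] with z hz
      exact lt_of_le_of_lt (mono (hz : z ≤ a)) hb
  · -- right
    have hI : (⋂ n : ℕ, Set.Iic (a + 1/(n+1))) = Set.Iic a := by
      ext z
      simp only [mem_iInter, mem_Iic]
      constructor
      · intro h
        by_contra hz
        push_neg at hz
        obtain ⟨n, hn⟩ := exists_nat_one_div_lt (sub_pos.2 hz)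
        have := h n
        push_cast at hn this ⊢
        linarith
      · intro h n; linarith [hd n]
    have hm : Antitone fun n : ℕ => Set.Iic (a + 1/(n+1)) := by
      intro n k hnk
      apply Iic_subset_Iic.2
      have : (1:ℝ)/(k+1) ≤ 1/(n+1) := by
        apply one_div_le_one_div_of_le (by positivity)
        exact_mod_cast Nat.add_le_add_right hnk 1
      linarith
    have hl := tendsto_measure_iInter_atTop (μ := ν)
      (fun n => measurableSet_Iic.nullMeasurableSet) hm ⟨0, measure_ne_top _ _⟩
    rw [hI] at hl
    have hl' : Tendsto (fun n : ℕ => (ν (Set.Iic (a + 1/(n+1)))).toReal) atTop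
        (𝓝 ((ν (Set.Iic a)).toReal)) :=
      (ENNReal.tendsto_toReal (measure_ne_top ν _)).comp hl
    rw [ContinuousWithinAt]
    apply tendsto_order.2
    constructor
    · intro b hb
      filter_upwards [self_mem_nhdsWithin] with z hz
      exact lt_of_lt_of_le hb (mono (hz : a ≤ z))
    · intro b hb
      obtain ⟨n, hn⟩ := (hl'.eventually (eventually_lt_nhds hb)).exists
      filter_upwards [Ico_mem_nhdsGE_of_mem (⟨le_refl a, by linarith [hd n]⟩ :
        a ∈ Set.Ico a (a + 1/(n+1)))] with z hz
      exact lt_of_le_of_lt (mono hz.2.le) hn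

set_option linter.unusedSectionVars false
set_option linter.unusedVariables false

lemma concave_tangent {g : ℝ → ℝ} {g' x y : ℝ} (hg : ConcaveOn ℝ (Set.Ioi 0) g)
    (hx : 0 < x) (hy : 0 < y) (hd : HasDerivAt g g' x) : g y ≤ g x + g' * (y - x) := by
  rcases eq_or_ne y x with rfl | hyx
  · simp
  have h1 : HasDerivAt (fun t : ℝ => x + t * (y - x)) (y - x) 0 := by
    simpa using ((hasDerivAt_id (0:ℝ)).mul_const (y - x)).const_add x
  have hd' : HasDerivAt g g' (x + 0 * (y - x)) := by
    rwa [show x + 0 * (y - x) = x by ring]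
  have h2 : HasDerivAt (fun t : ℝ => g (x + t * (y - x))) (g' * (y - x)) 0 :=
    HasDerivAt.comp 0 hd' h1
  have hslope := hasDerivAt_iff_tendsto_slope.1 h2
  have hmono : (𝓝[>] (0:ℝ)) ≤ 𝓝[≠] (0:ℝ) :=
    nhdsWithin_mono 0 (fun t (ht : t ∈ Set.Ioi 0) => ne_of_gt ht)
  have key : ∀ᶠ t in 𝓝[>] (0:ℝ),
      g y - g x ≤ slope (fun t : ℝ => g (x + t * (y - x))) 0 t := by
    filter_upwards [Ioo_mem_nhdsGT_of_mem (⟨le_refl (0:ℝ), zero_lt_one⟩ :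
      (0:ℝ) ∈ Set.Ico 0 1)] with t ht
    have ht0 : 0 < t := ht.1
    have ht1 : t < 1 := ht.2
    have hmem : x + t * (y - x) ∈ Set.Ioi (0:ℝ) := by
      have : x + t * (y - x) = (1 - t) * x + t * y := by ring
      rw [this]; exact mem_Ioi.2 (by nlinarith)
    have hc := hg.2 (mem_Ioi.2 hx) (mem_Ioi.2 hy) (by linarith : (0:ℝ) ≤ 1 - t)
      (le_of_lt ht0) (by ring)
    simp only [smul_eq_mul] at hc
    have hc' : t * (g y - g x) ≤ g (x + t * (y - x)) - g x := by
      have : (1 - t) * x + t * y = x + t * (y - x) := by ring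
      rw [this] at hc; linarith
    rw [slope_def_field, sub_zero, le_div_iff₀ ht0]
    have : x + 0 * (y - x) = x := by ring
    rw [this]
    nlinarith [hc']
  have := ge_of_tendsto (hslope.mono_left hmono) key
  linarith

noncomputable def nu (μ : Measure ℝ) : Measure ℝ :=
  μ.withDensity (fun t => ENNReal.ofReal t)

lemma mu_atom (μ : Measure ℝ) (hac : μ ≪ MeasureTheory.volume) (x : ℝ) : μ {x} = 0 :=
  hac (by simp)

lemma nonneg_ae (μ : Measure ℝ) (hsupp : μ (Set.Iio 0) = 0) : ∀ᵐ t ∂μ, 0 ≤ t := by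
  rw [ae_iff]
  have : {a : ℝ | ¬ 0 ≤ a} = Set.Iio 0 := by
    ext t; simp [Set.mem_Iio, not_le]
  rw [this, hsupp]

lemma nu_finite (μ : Measure ℝ) (hint : Integrable id μ) : IsFiniteMeasure (nu μ) := by
  constructor
  rw [nu, withDensity_apply _ MeasurableSet.univ, Measure.restrict_univ]
  calc ∫⁻ t, ENNReal.ofReal t ∂μ ≤ ∫⁻ t, ‖t‖ₑ ∂μ := by
        apply lintegral_mono; intro t
        simp only [← ofReal_norm_eq_enorm, Real.norm_eq_abs]
        exact ENNReal.ofReal_le_ofReal (le_abs_self t)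
    _ < ⊤ := hint.2

lemma nu_atom (μ : Measure ℝ) (hac : μ ≪ MeasureTheory.volume) (x : ℝ) : nu μ {x} = 0 := by
  rw [nu, withDensity_apply _ (measurableSet_singleton x)]
  exact setLIntegral_measure_zero _ _ (mu_atom μ hac x)

lemma setint (μ : Measure ℝ) (hsupp : μ (Set.Iio 0) = 0) (hint : Integrable id μ)
    (s : Set ℝ) (hs : MeasurableSet s) :
    ∫ t in s, t ∂μ = (nu μ s).toReal := by
  have hnn : (0:ℝ→ℝ) ≤ᵐ[μ.restrict s] id := ae_restrict_of_ae (by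
    filter_upwards [nonneg_ae μ hsupp] with t ht using ht)
  have h := MeasureTheory.ofReal_integral_eq_lintegral_ofReal (hint.restrict (s := s)) hnn
  simp only [id] at h
  have h2 : nu μ s = ENNReal.ofReal (∫ t in s, t ∂μ) := by
    rw [nu, withDensity_apply _ hs, ← h]
  rw [h2, ENNReal.toReal_ofReal]
  exact integral_nonneg_of_ae hnn

noncomputable def Ifun (μ : Measure ℝ) (z : ℝ) : ℝ := ∫ t in Set.Ioi z, t ∂μ

section PhiI
variable (μ : Measure ℝ) [IsProbabilityMeasure μ]

lemma Phi_mono : Monotone (Phi μ) := cdf_mono μ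

lemma Phi_cont (hac : μ ≪ MeasureTheory.volume) : Continuous (Phi μ) :=
  cdf_cont μ (mu_atom μ hac)

lemma Phi_nonneg (z : ℝ) : 0 ≤ Phi μ z := ENNReal.toReal_nonneg

lemma Phi_lt_one (h : μ (Set.Iic z) < 1) : Phi μ z < 1 := by
  rw [Phi]
  rw [show (1:ℝ) = (1:ℝ≥0∞).toReal by simp]
  exact ENNReal.toReal_strict_mono (by simp) h

lemma Phi_le_one (z : ℝ) : Phi μ z ≤ 1 := by
  rw [Phi, show (1:ℝ) = (μ Set.univ).toReal by simp]
  exact ENNReal.toReal_mono (measure_ne_top _ _) (measure_mono (Set.subset_univ _))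

lemma Phi_nonpos (hsupp : μ (Set.Iio 0) = 0) (hac : μ ≪ MeasureTheory.volume)
    (z : ℝ) (hz : z ≤ 0) : Phi μ z = 0 := by
  rw [Phi]
  have : μ (Set.Iic z) = 0 := by
    have h1 : μ (Set.Iic 0) = 0 := by
      have : Set.Iic (0:ℝ) = Set.Iio 0 ∪ {0} := by rw [Set.Iio_union_right]
      rw [this]
      exact le_antisymm (le_trans (measure_union_le _ _)
        (by rw [hsupp, mu_atom μ hac 0, add_zero])) zero_le
    exact le_antisymm (le_trans (measure_mono (Set.Iic_subset_Iic.2 hz)) h1.le) zero_le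
  simp [this]

lemma Phi_tendsto : Tendsto (Phi μ) atTop (𝓝 1) := by
  have h := tendsto_measure_Iic_atTop (μ := μ)
  rw [measure_univ] at h
  have := (ENNReal.tendsto_toReal (by simp : (1:ℝ≥0∞) ≠ ⊤)).comp h
  exact this

lemma Phi_compl (z : ℝ) : (μ (Set.Ioi z)).toReal = 1 - Phi μ z := by
  have h := measure_add_measure_compl (μ := μ) (measurableSet_Iic (a := z))
  rw [Set.compl_Iic, measure_univ] at h
  have h2 : (μ (Set.Iic z)).toReal + (μ (Set.Ioi z)).toReal = 1 := by
    rw [← ENNReal.toReal_add (measure_ne_top _ _) (measure_ne_top _ _), h]; simp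
  rw [Phi]; linarith

lemma Phi_diff (z w : ℝ) (hzw : z ≤ w) :
    Phi μ w - Phi μ z = (μ (Set.Ioc z w)).toReal := by
  have h : μ (Set.Iic z) + μ (Set.Ioc z w) = μ (Set.Iic w) := by
    rw [← Set.Iic_union_Ioc_eq_Iic hzw]
    exact (measure_union (Set.Iic_disjoint_Ioc le_rfl) measurableSet_Ioc).symm
  have h2 : (μ (Set.Iic z)).toReal + (μ (Set.Ioc z w)).toReal = (μ (Set.Iic w)).toReal := by
    rw [← ENNReal.toReal_add (measure_ne_top _ _) (measure_ne_top _ _), h]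
  rw [Phi, Phi]; linarith

lemma Ifun_eq (hsupp : μ (Set.Iio 0) = 0) (hint : Integrable id μ) (z : ℝ) : Ifun μ z = (nu μ (Set.Ioi z)).toReal :=
  setint μ hsupp hint _ measurableSet_Ioi

lemma Ifun_anti (hsupp : μ (Set.Iio 0) = 0) (hint : Integrable id μ) : Antitone (Ifun μ) := by
  haveI := nu_finite μ hint
  intro a b hab
  rw [Ifun_eq μ hsupp hint, Ifun_eq μ hsupp hint]
  exact ENNReal.toReal_mono (measure_ne_top _ _) (measure_mono (Set.Ioi_subset_Ioi hab))

lemma Ifun_nonneg (hsupp : μ (Set.Iio 0) = 0) (hint : Integrable id μ) (z : ℝ) : 0 ≤ Ifun μ z := by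
  rw [Ifun_eq μ hsupp hint]; exact ENNReal.toReal_nonneg

lemma Ifun_le (hsupp : μ (Set.Iio 0) = 0) (hint : Integrable id μ) (z : ℝ) : Ifun μ z ≤ (nu μ Set.univ).toReal := by
  haveI := nu_finite μ hint
  rw [Ifun_eq μ hsupp hint]
  exact ENNReal.toReal_mono (measure_ne_top _ _) (measure_mono (Set.subset_univ _))

lemma Ifun_cont (hsupp : μ (Set.Iio 0) = 0) (hac : μ ≪ MeasureTheory.volume) (hint : Integrable id μ) : Continuous (Ifun μ) := by
  haveI := nu_finite μ hint
  have hall : ∀ z, Ifun μ z = (nu μ Set.univ).toReal - (nu μ (Set.Iic z)).toReal := by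
    intro z
    have h := measure_add_measure_compl (μ := nu μ) (measurableSet_Iic (a := z))
    rw [Set.compl_Iic] at h
    have h2 : (nu μ (Set.Iic z)).toReal + (nu μ (Set.Ioi z)).toReal
        = (nu μ Set.univ).toReal := by
      rw [← ENNReal.toReal_add (measure_ne_top _ _) (measure_ne_top _ _), h]
    rw [Ifun_eq μ hsupp hint]; linarith
  simp only [funext hall]
  exact continuous_const.sub (cdf_cont (nu μ) (nu_atom μ hac))

lemma Ifun_diff (hint : Integrable id μ) (z w : ℝ) (hzw : z ≤ w) :
    Ifun μ z = (∫ t in Set.Ioc z w, t ∂μ) + Ifun μ w := by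
  rw [Ifun, Ifun, ← Set.Ioc_union_Ioi_eq_Ioi hzw]
  exact setIntegral_union (Set.Ioc_disjoint_Ioi le_rfl) measurableSet_Ioi
    (hint.integrableOn) (hint.integrableOn)

lemma Ifun_pos (hint : Integrable id μ) (Z : ℝ) (hZ : 0 < Z) (h1 : μ (Set.Iic Z) < 1) : 0 < Ifun μ Z := by
  have hpos : 0 < (μ (Set.Ioi Z)).toReal := by
    rw [Phi_compl μ]
    have := Phi_lt_one μ h1
    linarith
  have hconst : ∫ t in Set.Ioi Z, Z ∂μ = (μ (Set.Ioi Z)).toReal * Z := by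
    rw [setIntegral_const, smul_eq_mul]; rfl
  have hmono : ∫ t in Set.Ioi Z, Z ∂μ ≤ ∫ t in Set.Ioi Z, t ∂μ := by
    apply setIntegral_mono_on (integrableOn_const (measure_ne_top _ _))
      hint.integrableOn measurableSet_Ioi
    intro t ht; exact (Set.mem_Ioi.1 ht).le
  rw [Ifun]
  calc (0:ℝ) < (μ (Set.Ioi Z)).toReal * Z := by positivity
    _ = ∫ t in Set.Ioi Z, Z ∂μ := hconst.symm
    _ ≤ _ := hmono

end PhiI

section Jineq
variable (μ : Measure ℝ) [IsProbabilityMeasure μ]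

lemma int_Ioc_one_sub (hint : Integrable id μ) (m a b : ℝ) (hab : a ≤ b) :
    ∫ t in Set.Ioc a b, (1 - m*t) ∂μ
      = (Phi μ b - Phi μ a) - m*(Ifun μ a - Ifun μ b) := by
  have h1 : Ifun μ a - Ifun μ b = ∫ t in Set.Ioc a b, t ∂μ := by
    rw [Ifun_diff μ hint a b hab]; ring
  have h2 := Phi_diff μ a b hab
  have hmt : Integrable (fun t : ℝ => m * t) μ := by
    have := hint.const_mul m
    simpa [id] using this
  rw [integral_sub (integrableOn_const (measure_ne_top _ _) : IntegrableOn (fun _ => (1:ℝ)) (Set.Ioc a b) μ) hmt.integrableOn,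
    setIntegral_const, integral_const_mul, smul_eq_mul, mul_one, measureReal_def, h2, ← h1]

lemma key_J (hint : Integrable id μ) (β lam m : ℝ)
    (hβ0 : 0 < β) (hlam : 1 ≤ lam) (hm : 0 < m) (z : ℝ) :
    (1 - β*(lam * Phi μ (1/m) + 1 - lam)) - β*lam*(m*Ifun μ (1/m))
      ≤ (1 - β*(lam * Phi μ z + 1 - lam)) - β*lam*(m*Ifun μ z) := by
  have hbl : 0 < β * lam := by nlinarith
  rcases le_total z (1/m) with hz | hz
  · have hid := int_Ioc_one_sub μ hint m z (1/m) hz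
    have hnn : 0 ≤ ∫ t in Set.Ioc z (1/m), (1 - m*t) ∂μ := by
      apply setIntegral_nonneg measurableSet_Ioc
      intro t ht
      have h1 : t * m ≤ 1 := (le_div_iff₀ hm).1 ht.2
      nlinarith
    nlinarith [hnn]
  · have hid := int_Ioc_one_sub μ hint m (1/m) z hz
    have hnn : 0 ≤ ∫ t in Set.Ioc (1/m) z, (m*t - 1) ∂μ := by
      apply setIntegral_nonneg measurableSet_Ioc
      intro t ht
      have h1 : 1/m < t := ht.1
      have : 1 ≤ m * t := by
        rw [div_lt_iff₀ hm] at h1; linarith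
      linarith
    have hswap : ∫ t in Set.Ioc (1/m) z, (m*t - 1) ∂μ
        = - ∫ t in Set.Ioc (1/m) z, (1 - m*t) ∂μ := by
      rw [← integral_neg]; congr 1; funext t; ring
    nlinarith [hnn]

lemma T_eq (hint : Integrable id μ) (m : ℝ) (hm : 0 < m) :
    ∫ z, max (m * z - 1) 0 ∂μ = m * Ifun μ (1/m) - (1 - Phi μ (1/m)) := by
  have hfun : (fun z : ℝ => max (m * z - 1) 0)
      = Set.indicator (Set.Ioi (1/m)) (fun z => m * z - 1) := by
    funext z
    rcases lt_or_ge (1/m) z with h | h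
    · rw [Set.indicator_of_mem (Set.mem_Ioi.2 h)]
      rw [div_lt_iff₀ hm] at h
      exact max_eq_left (by linarith)
    · rw [Set.indicator_of_notMem (by simp only [Set.mem_Ioi, not_lt]; exact h)]
      rw [le_div_iff₀ hm] at h
      exact max_eq_right (by linarith)
  rw [hfun, integral_indicator measurableSet_Ioi]
  have hmt : Integrable (fun t : ℝ => m * t) μ := by
    have := hint.const_mul m
    simpa [id] using this
  rw [show (fun z : ℝ => m * z - 1) = fun z : ℝ => m * z - 1 from rfl]
  rw [integral_sub hmt.integrableOn (integrableOn_const (measure_ne_top _ _)),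
    integral_const_mul, setIntegral_const, smul_eq_mul, mul_one, measureReal_def, Phi_compl μ]
  rfl

lemma T_pos (hint : Integrable id μ) (m : ℝ) (hm : 0 < m) (hlt : μ (Set.Iic (2/m)) < 1) :
    0 < ∫ z, max (m * z - 1) 0 ∂μ := by
  have hind : Integrable (Set.indicator (Set.Ioi (2/m)) (fun _ : ℝ => (1:ℝ))) μ :=
    (integrable_const (1:ℝ)).indicator measurableSet_Ioi
  have hmax : Integrable (fun z : ℝ => max (m * z - 1) 0) μ := by
    have h1 : Integrable (fun t : ℝ => m * t - 1) μ := by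
      have := (hint.const_mul m).sub (integrable_const (1:ℝ))
      exact this
    exact h1.pos_part
  have hmono : ∀ z : ℝ, Set.indicator (Set.Ioi (2/m)) (fun _ => (1:ℝ)) z
      ≤ max (m * z - 1) 0 := by
    intro z
    rcases lt_or_ge (2/m) z with h | h
    · rw [Set.indicator_of_mem (Set.mem_Ioi.2 h)]
      rw [div_lt_iff₀ hm] at h
      exact le_max_of_le_left (by linarith)
    · rw [Set.indicator_of_notMem (by simp only [Set.mem_Ioi, not_lt]; exact h)]
      exact le_max_right _ _
  have h2 : ∫ z, Set.indicator (Set.Ioi (2/m)) (fun _ => (1:ℝ)) z ∂μ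
      = (μ (Set.Ioi (2/m))).toReal := by
    rw [integral_indicator measurableSet_Ioi, setIntegral_const, smul_eq_mul, mul_one]; rfl
  have h3 : 0 < (μ (Set.Ioi (2/m))).toReal := by
    rw [Phi_compl μ]
    have := Phi_lt_one μ hlt
    linarith
  calc (0:ℝ) < (μ (Set.Ioi (2/m))).toReal := h3
    _ = ∫ z, Set.indicator (Set.Ioi (2/m)) (fun _ => (1:ℝ)) z ∂μ := h2.symm
    _ ≤ ∫ z, max (m * z - 1) 0 ∂μ := integral_mono hind hmax hmono

end Jineq

section Prod
variable {F FK FX : ℝ → ℝ → ℝ} {m : ℝ}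

lemma slice_K (hconc : ConcaveOn ℝ (Set.Ioi 0 ×ˢ Set.Ioi 0) (fun p : ℝ × ℝ => F p.1 p.2)) :
    ConcaveOn ℝ (Set.Ioi 0) (fun k => F k 1) := by
  refine ⟨convex_Ioi 0, fun k1 h1 k2 h2 a b ha hb hab => ?_⟩
  have := hconc.2 (Set.mk_mem_prod h1 (Set.mem_Ioi.2 one_pos))
    (Set.mk_mem_prod h2 (Set.mem_Ioi.2 one_pos)) ha hb hab
  simp only [Prod.smul_mk, Prod.mk_add_mk, smul_eq_mul] at this
  rw [show a * 1 + b * 1 = 1 by linarith] at this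
  exact this

lemma slice_X (hconc : ConcaveOn ℝ (Set.Ioi 0 ×ˢ Set.Ioi 0) (fun p : ℝ × ℝ => F p.1 p.2))
    (K : ℝ) (hK : 0 < K) : ConcaveOn ℝ (Set.Ioi 0) (fun x => F K x) := by
  refine ⟨convex_Ioi 0, fun x1 h1 x2 h2 a b ha hb hab => ?_⟩
  have := hconc.2 (Set.mk_mem_prod (Set.mem_Ioi.2 hK) h1)
    (Set.mk_mem_prod (Set.mem_Ioi.2 hK) h2) ha hb hab
  simp only [Prod.smul_mk, Prod.mk_add_mk, smul_eq_mul] at this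
  rw [show a * K + b * K = K by nlinarith] at this
  exact this

lemma fk_ge_m (hconc : ConcaveOn ℝ (Set.Ioi 0 ×ˢ Set.Ioi 0) (fun p : ℝ × ℝ => F p.1 p.2))
    (hFK : ∀ K X : ℝ, 0 < K → 0 < X → HasDerivAt (fun k => F k X) (FK K X) K)
    (hlim : Filter.Tendsto (fun K => F K 1 / K) Filter.atTop (nhds m))
    (K : ℝ) (hK : 0 < K) : m ≤ FK K 1 := by
  have htan : ∀ y : ℝ, 0 < y → F y 1 ≤ F K 1 + FK K 1 * (y - K) :=
    fun y hy => concave_tangent (slice_K hconc) hK hy (hFK K 1 hK one_pos)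
  have hrhs : Tendsto (fun y : ℝ => F K 1 * y⁻¹ + FK K 1 * (1 - K * y⁻¹)) atTop
      (𝓝 (FK K 1)) := by
    have h1 : Tendsto (fun y : ℝ => F K 1 * y⁻¹) atTop (𝓝 0) := by
      simpa using tendsto_inv_atTop_zero.const_mul (F K 1)
    have h2 : Tendsto (fun y : ℝ => FK K 1 * (1 - K * y⁻¹)) atTop (𝓝 (FK K 1)) := by
      have : Tendsto (fun y : ℝ => 1 - K * y⁻¹) atTop (𝓝 1) := by
        simpa using tendsto_const_nhds.sub (tendsto_inv_atTop_zero.const_mul K)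
      simpa using this.const_mul (FK K 1)
    simpa using h1.add h2
  refine le_of_tendsto_of_tendsto hlim hrhs ?_
  filter_upwards [eventually_gt_atTop (0:ℝ)] with y hy
  have htan' := htan y hy
  have heq : F K 1 * y⁻¹ + FK K 1 * (1 - K * y⁻¹) = (F K 1 + FK K 1 * (y - K)) * y⁻¹ := by
    field_simp
  show F y 1 / y ≤ F K 1 * y⁻¹ + FK K 1 * (1 - K * y⁻¹)
  rw [heq, div_eq_mul_inv]
  exact mul_le_mul_of_nonneg_right htan' (inv_nonneg.2 hy.le)

lemma fx_le_two_f (hconc : ConcaveOn ℝ (Set.Ioi 0 ×ˢ Set.Ioi 0) (fun p : ℝ × ℝ => F p.1 p.2))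
    (hFX : ∀ K X : ℝ, 0 < K → 0 < X → HasDerivAt (fun x => F K x) (FX K X) X)
    (hpos : ∀ K X : ℝ, 0 < K → 0 < X → 0 < F K X)
    (K : ℝ) (hK : 0 < K) : FX K 1 ≤ 2 * F K 1 := by
  have htan := concave_tangent (slice_X hconc K hK) one_pos (by norm_num : (0:ℝ) < 1/2)
    (hFX K 1 hK one_pos)
  have h2 := hpos K (1/2) hK (by norm_num)
  nlinarith

end Prod

noncomputable def xf (μ : Measure ℝ) (β lam z : ℝ) : ℝ := β * (lam * Phi μ z + 1 - lam)
noncomputable def Af (F FK FX : ℝ → ℝ → ℝ) (K z : ℝ) : ℝ :=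
  z * FK K 1 * F K 1 - F K 1 + FX K 1
noncomputable def hf (μ : Measure ℝ) (β lam : ℝ) (F FK FX : ℝ → ℝ → ℝ) (K z : ℝ) : ℝ :=
  xf μ β lam z * Af F FK FX K z - FX K 1

end Aux

set_option maxHeartbeats 1000000 in
/-- **Proposition 2, part 1.** Under Assumptions 1–3, `1 ≤ λ < λ̄`, and the Inada
condition at zero, the equilibrium dynamics has a steady state `(K, z̄)`. -/
theorem steady_state_exists
    (μ : Measure ℝ) (hμ : Assumption1 μ)
    (F FK FX : ℝ → ℝ → ℝ) (m : ℝ) (hF : Assumption2 F FK FX m)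
    (β lam : ℝ) (hβ : β ∈ Set.Ioo (0 : ℝ) 1) (hlam : 1 ≤ lam)
    (hA3 : 1 - Phi μ (1 / m) < β * m * ∫ z in Set.Ioi (1 / m), z ∂μ)
    (hlt : lam < lamBar β m μ)
    (hInada : Tendsto (fun K => F K 1 / K) (nhdsWithin 0 (Set.Ioi 0)) atTop) :
    ∃ K zb : ℝ, 0 < K ∧ 1 - 1 / lam < Phi μ zb ∧
      K = β * lam * Wfun μ β lam F K zb * ∫ z in Set.Ioi zb, z ∂μ ∧
      zb = (Pfun μ β lam F K zb + FX K 1) / (FK K 1 * Pfun μ β lam F K zb) := by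
  obtain ⟨hβ0, hβ1⟩ := hβ
  haveI hprob : IsProbabilityMeasure μ := hμ.prob
  have hm : 0 < m := hF.m_pos
  have hlam0 : (0:ℝ) < lam := lt_of_lt_of_le one_pos hlam
  have hbl : 0 < β * lam := mul_pos hβ0 hlam0
  have hfpos : ∀ K : ℝ, 0 < K → 0 < F K 1 := fun K hK => hF.pos K 1 hK one_pos
  have hfkpos : ∀ K : ℝ, 0 < K → 0 < FK K 1 := fun K hK => hF.FK_pos K 1 hK one_pos
  have hfxpos : ∀ K : ℝ, 0 < K → 0 < FX K 1 := fun K hK => hF.FX_pos K 1 hK one_pos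
  have hfk_ge : ∀ K : ℝ, 0 < K → m ≤ FK K 1 := fk_ge_m hF.concave hF.hFK hF.lim_avg
  have hfx2 : ∀ K : ℝ, 0 < K → FX K 1 ≤ 2 * F K 1 := fx_le_two_f hF.concave hF.hFX hF.pos
  have hfcont : ∀ K : ℝ, 0 < K → ContinuousAt (fun k => F k 1) K :=
    fun K hK => (hF.hFK K 1 hK one_pos).continuousAt
  have hfkcont : ∀ K : ℝ, 0 < K → ContinuousAt (fun k => FK k 1) K := by
    intro K hK
    have h1 : ContinuousAt (fun p : ℝ × ℝ => FK p.1 p.2) (K, 1) :=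
      hF.FK_cont.continuousAt ((isOpen_Ioi.prod isOpen_Ioi).mem_nhds
        (Set.mk_mem_prod (Set.mem_Ioi.2 hK) (Set.mem_Ioi.2 one_pos)))
    have h2 : ContinuousAt (fun k : ℝ => ((k, (1:ℝ)) : ℝ × ℝ)) K :=
      continuousAt_id.prodMk continuousAt_const
    have h3 : ContinuousAt ((fun p : ℝ × ℝ => FK p.1 p.2) ∘ (fun k : ℝ => (k, (1:ℝ)))) K :=
      ContinuousAt.comp (x := K) h1 h2
    exact h3
  have hfxcont : ∀ K : ℝ, 0 < K → ContinuousAt (fun k => FX k 1) K := by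
    intro K hK
    have h1 : ContinuousAt (fun p : ℝ × ℝ => FX p.1 p.2) (K, 1) :=
      hF.FX_cont.continuousAt ((isOpen_Ioi.prod isOpen_Ioi).mem_nhds
        (Set.mk_mem_prod (Set.mem_Ioi.2 hK) (Set.mem_Ioi.2 one_pos)))
    have h2 : ContinuousAt (fun k : ℝ => ((k, (1:ℝ)) : ℝ × ℝ)) K :=
      continuousAt_id.prodMk continuousAt_const
    have h3 : ContinuousAt ((fun p : ℝ × ℝ => FX p.1 p.2) ∘ (fun k : ℝ => (k, (1:ℝ)))) K :=
      ContinuousAt.comp (x := K) h1 h2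
    exact h3
  -- facts about xf
  have hxmono : Monotone (xf μ β lam) := by
    intro a b hab
    have := Phi_mono μ hab
    simp only [xf]; nlinarith
  have hxcont : Continuous (xf μ β lam) := by
    have hc := Phi_cont μ hμ.absCont
    show Continuous fun z => β * (lam * Phi μ z + 1 - lam)
    exact continuous_const.mul (((continuous_const.mul hc).add continuous_const).sub continuous_const)
  have hxle : ∀ z, xf μ β lam z ≤ β := by
    intro z; have := Phi_le_one μ z; simp only [xf]; nlinarith
  have hx_nonpos : ∀ z : ℝ, z ≤ 0 → xf μ β lam z ≤ 0 := by
    intro z hz; simp only [xf, Phi_nonpos μ hμ.supp hμ.absCont z hz]; nlinarith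
  have hxtend : Tendsto (xf μ β lam) atTop (𝓝 β) := by
    have h2 := (((Phi_tendsto μ).const_mul lam).add_const (1 - lam)).const_mul β
    have : β = β * (lam * 1 + (1 - lam)) := by ring
    rw [this]
    exact h2.congr (fun z => by simp only [xf]; ring)
  -- choose Z
  obtain ⟨z1, hz1⟩ : ∃ z1, β/2 < xf μ β lam z1 :=
    (hxtend.eventually (eventually_gt_nhds (by linarith : β/2 < β))).exists
  set Z : ℝ := max z1 (8/(m*β)) with hZdef
  have hZpos : 0 < Z := lt_of_lt_of_le (by positivity) (le_max_right _ _)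
  have hxZ : β/2 < xf μ β lam Z := lt_of_lt_of_le hz1 (hxmono (le_max_left _ _))
  have hxZpos : 0 < xf μ β lam Z := lt_trans (by positivity) hxZ
  have hZbig : 3 < xf μ β lam Z * Z * m := by
    have h8 : 8/(m*β) ≤ Z := le_max_right _ _
    have h9 : (β/2) * (8/(m*β)) * m = 4 := by field_simp; ring
    calc (3:ℝ) < 4 := by norm_num
      _ = (β/2) * (8/(m*β)) * m := h9.symm
      _ ≤ (β/2) * Z * m :=
          mul_le_mul_of_nonneg_right (mul_le_mul_of_nonneg_left h8 (by positivity)) hm.le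
      _ ≤ xf μ β lam Z * Z * m :=
          mul_le_mul_of_nonneg_right (mul_le_mul_of_nonneg_right hxZ.le hZpos.le) hm.le
  -- hf K Z > 0 for all K > 0
  have hhZ : ∀ K : ℝ, 0 < K → 0 < hf μ β lam F FK FX K Z := by
    intro K hK
    have hf1 := hfpos K hK
    have hk1 := hfk_ge K hK
    have hx1 := hfx2 K hK
    have hxZle := hxle Z
    have hxp := hfxpos K hK
    simp only [hf, Af, xf] at *
    nlinarith [mul_pos (mul_pos hxZpos hZpos) hf1]
  -- the threshold point s
  have hSne : Set.Nonempty {z : ℝ | 0 < xf μ β lam z} := ⟨Z, hxZpos⟩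
  have hSbdd : BddBelow {z : ℝ | 0 < xf μ β lam z} := by
    refine ⟨0, fun w hw => ?_⟩
    by_contra hcon
    push_neg at hcon
    exact absurd (hx_nonpos w hcon.le) (not_le.2 hw)
  set s : ℝ := sInf {z : ℝ | 0 < xf μ β lam z} with hsdef
  have hs_gt : ∀ w, s < w → 0 < xf μ β lam w := by
    intro w hw
    obtain ⟨a, ha, haw⟩ := (csInf_lt_iff hSbdd hSne).1 hw
    exact lt_of_lt_of_le ha (hxmono haw.le)
  have hxs : xf μ β lam s = 0 := by
    have hle : xf μ β lam s ≤ 0 := by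
      have htd : Tendsto (xf μ β lam) (𝓝[<] s) (𝓝 (xf μ β lam s)) :=
        (hxcont.continuousAt).continuousWithinAt
      refine le_of_tendsto htd ?_
      filter_upwards [self_mem_nhdsWithin] with z hz
      by_contra hcon
      push_neg at hcon
      exact absurd (csInf_le hSbdd hcon) (not_le.2 hz)
    have hge : 0 ≤ xf μ β lam s := by
      have htd : Tendsto (xf μ β lam) (𝓝[>] s) (𝓝 (xf μ β lam s)) :=
        (hxcont.continuousAt).continuousWithinAt
      refine ge_of_tendsto htd ?_
      filter_upwards [self_mem_nhdsWithin] with z hz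
      exact (hs_gt z hz).le
    linarith
  have hsZ : s < Z := by
    rcases lt_or_eq_of_le (csInf_le hSbdd hxZpos) with h | h
    · rw [← hsdef] at h; exact h
    · rw [← hsdef] at h; rw [h] at hxs; linarith
  -- continuity of z ↦ hf K z
  have hhcontz : ∀ K : ℝ, Continuous (fun z => hf μ β lam F FK FX K z) := by
    intro K
    simp only [hf, Af]
    exact (hxcont.mul (((continuous_id.mul continuous_const).mul
      continuous_const).sub continuous_const |>.add continuous_const)).sub continuous_const
  -- existence of root
  have hex : ∀ K : ℝ, ∃ z, 0 < K →
      (0 < xf μ β lam z ∧ hf μ β lam F FK FX K z = 0 ∧ z ≤ Z) := by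
    intro K
    by_cases hK : 0 < K
    swap
    · exact ⟨0, fun h => absurd h hK⟩
    have hneg : hf μ β lam F FK FX K s < 0 := by
      simp only [hf, hxs]
      simpa using hfxpos K hK
    have hnb : {z : ℝ | hf μ β lam F FK FX K z < 0} ∈ 𝓝 s :=
      (hhcontz K).continuousAt.preimage_mem_nhds (Iio_mem_nhds hneg)
    obtain ⟨ε, hε, hball⟩ := Metric.mem_nhds_iff.1 hnb
    set w : ℝ := min (s + ε/2) ((s+Z)/2) with hwdef
    have hws : s < w := lt_min (by linarith) (by linarith)
    have hwZ : w < Z := lt_of_le_of_lt (min_le_right _ _) (by linarith)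
    have hwball : w ∈ Metric.ball s ε := by
      rw [Metric.mem_ball, Real.dist_eq, abs_of_pos (by linarith : (0:ℝ) < w - s)]
      have : w ≤ s + ε/2 := min_le_left _ _
      linarith
    have hwneg : hf μ β lam F FK FX K w < 0 := hball hwball
    have hwx : 0 < xf μ β lam w := hs_gt w hws
    obtain ⟨z, hzmem, hz0⟩ := intermediate_value_Icc hwZ.le
      ((hhcontz K).continuousOn) ⟨hwneg.le, (hhZ K hK).le⟩
    exact ⟨z, fun _ => ⟨lt_of_lt_of_le hwx (hxmono hzmem.1), hz0, hzmem.2⟩⟩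
  choose zb hzb using hex
  -- root facts
  have hzbx : ∀ K : ℝ, 0 < K → 0 < xf μ β lam (zb K) := fun K hK => (hzb K hK).1
  have hzb0 : ∀ K : ℝ, 0 < K → hf μ β lam F FK FX K (zb K) = 0 := fun K hK => (hzb K hK).2.1
  have hzbZ : ∀ K : ℝ, 0 < K → zb K ≤ Z := fun K hK => (hzb K hK).2.2
  have hAroot : ∀ K : ℝ, 0 < K → 0 < Af F FK FX K (zb K) := by
    intro K hK
    have h0 := hzb0 K hK
    have hx0 := hzbx K hK
    have hxp := hfxpos K hK
    simp only [hf] at h0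
    nlinarith
  -- sign lemmas
  have hsign : ∀ K : ℝ, 0 < K → ∀ w, 0 < xf μ β lam w →
      (w < zb K → hf μ β lam F FK FX K w < 0) ∧
      (zb K < w → 0 < hf μ β lam F FK FX K w) := by
    intro K hK w hxw
    have hc : 0 < FK K 1 * F K 1 := mul_pos (hfkpos K hK) (hfpos K hK)
    have hA := hAroot K hK
    have h0 := hzb0 K hK
    have hxzb := hzbx K hK
    have hxp := hfxpos K hK
    constructor
    · intro hwlt
      have hxmw : xf μ β lam w ≤ xf μ β lam (zb K) := hxmono hwlt.le
      have hdA : Af F FK FX K (zb K) = Af F FK FX K w + (zb K - w) * (FK K 1 * F K 1) := by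
        simp only [Af]; ring
      rcases le_or_gt (Af F FK FX K w) 0 with hAw | hAw
      · have hnp : xf μ β lam w * Af F FK FX K w ≤ 0 :=
          mul_nonpos_of_nonneg_of_nonpos hxw.le hAw
        simp only [hf]; linarith
      · simp only [hf] at h0 ⊢
        nlinarith [mul_pos hxzb (mul_pos (sub_pos.2 hwlt) hc),
          mul_nonneg (sub_nonneg.2 hxmw) hAw.le, hdA]
    · intro hwgt
      have hxmw : xf μ β lam (zb K) ≤ xf μ β lam w := hxmono hwgt.le
      have hdA : Af F FK FX K w = Af F FK FX K (zb K) + (w - zb K) * (FK K 1 * F K 1) := by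
        simp only [Af]; ring
      simp only [hf] at h0 ⊢
      nlinarith [mul_pos hxw (mul_pos (sub_pos.2 hwgt) hc),
        mul_nonneg (sub_nonneg.2 hxmw) hA.le, hdA]
  have hgt : ∀ K : ℝ, 0 < K → ∀ w, 0 < xf μ β lam w →
      hf μ β lam F FK FX K w < 0 → w < zb K := by
    intro K hK w hxw hneg
    rcases lt_trichotomy w (zb K) with h | h | h
    · exact h
    · rw [h] at hneg; rw [hzb0 K hK] at hneg; linarith
    · exact absurd ((hsign K hK w hxw).2 h) (not_lt.2 hneg.le)
  have hltt : ∀ K : ℝ, 0 < K → ∀ w, 0 < xf μ β lam w →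
      0 < hf μ β lam F FK FX K w → zb K < w := by
    intro K hK w hxw hpos
    rcases lt_trichotomy (zb K) w with h | h | h
    · exact h
    · rw [← h] at hpos; rw [hzb0 K hK] at hpos; linarith
    · exact absurd ((hsign K hK w hxw).1 h) (not_lt.2 hpos.le)
  -- continuity of zb
  have hzbcont : ∀ K0 : ℝ, 0 < K0 → ContinuousAt zb K0 := by
    intro K0 hK0
    rw [Metric.continuousAt_iff]
    intro ε hε
    have hxz0 : 0 < xf μ β lam (zb K0) := hzbx K0 hK0
    have hop : {z : ℝ | 0 < xf μ β lam z} ∈ 𝓝 (zb K0) :=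
      hxcont.continuousAt.preimage_mem_nhds (Ioi_mem_nhds hxz0)
    obtain ⟨r, hr, hrball⟩ := Metric.mem_nhds_iff.1 hop
    set ε' : ℝ := min (ε/2) (r/2) with hε'def
    have hε'pos : 0 < ε' := lt_min (by linarith) (by linarith)
    have hε'le : ε' ≤ ε/2 := min_le_left _ _
    have hε'r : ε' ≤ r/2 := min_le_right _ _
    have hxm : 0 < xf μ β lam (zb K0 - ε') := by
      apply hrball
      rw [Metric.mem_ball, Real.dist_eq, abs_of_nonpos (by linarith : zb K0 - ε' - zb K0 ≤ 0)]
      simp only [neg_sub]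
      linarith
    have hxp : 0 < xf μ β lam (zb K0 + ε') :=
      lt_of_lt_of_le hxz0 (hxmono (by linarith))
    have hminus : hf μ β lam F FK FX K0 (zb K0 - ε') < 0 :=
      (hsign K0 hK0 _ hxm).1 (by linarith)
    have hplus : 0 < hf μ β lam F FK FX K0 (zb K0 + ε') :=
      (hsign K0 hK0 _ hxp).2 (by linarith)
    have hKcont : ∀ w : ℝ, ContinuousAt (fun K => hf μ β lam F FK FX K w) K0 := by
      intro w
      simp only [hf, Af]
      exact (continuousAt_const.mul ((((continuousAt_const.mul (hfkcont K0 hK0)).mul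
        (hfcont K0 hK0)).sub (hfcont K0 hK0)).add (hfxcont K0 hK0))).sub (hfxcont K0 hK0)
    have hU1 : {K : ℝ | hf μ β lam F FK FX K (zb K0 - ε') < 0} ∈ 𝓝 K0 :=
      (hKcont _).preimage_mem_nhds (Iio_mem_nhds hminus)
    have hU2 : {K : ℝ | 0 < hf μ β lam F FK FX K (zb K0 + ε')} ∈ 𝓝 K0 :=
      (hKcont _).preimage_mem_nhds (Ioi_mem_nhds hplus)
    have hU3 : Set.Ioi (0:ℝ) ∈ 𝓝 K0 := Ioi_mem_nhds hK0
    obtain ⟨δ', hδ'pos, hδ'sub⟩ :=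
      Metric.mem_nhds_iff.1 (Filter.inter_mem (Filter.inter_mem hU1 hU2) hU3)
    refine ⟨δ', hδ'pos, ?_⟩
    intro K hdist
    have hKmem := hδ'sub (Metric.mem_ball.2 hdist)
    obtain ⟨⟨hKneg, hKposh⟩, hKpos⟩ := hKmem
    have h1 : zb K0 - ε' < zb K := hgt K hKpos _ hxm hKneg
    have h2 : zb K < zb K0 + ε' := hltt K hKpos _ hxp hKposh
    rw [Real.dist_eq, abs_lt]
    constructor <;> linarith
  -- the function G
  have hden : ∀ K : ℝ, 0 < K → 0 < 1 - xf μ β lam (zb K) := by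
    intro K hK
    have := hxle (zb K)
    linarith
  have hGcont : ∀ K : ℝ, 0 < K → ContinuousAt (fun K =>
      β * lam * (F K 1 / (1 - xf μ β lam (zb K))) * Ifun μ (zb K) - K) K := by
    intro K hK
    have h1 : ContinuousAt (fun K' => xf μ β lam (zb K')) K :=
      hxcont.continuousAt.comp (hzbcont K hK)
    have h2 : ContinuousAt (fun K' => Ifun μ (zb K')) K :=
      (Ifun_cont μ hμ.supp hμ.absCont hμ.finite_mean).continuousAt.comp (hzbcont K hK)
    have h3 : ContinuousAt (fun K' => 1 - xf μ β lam (zb K')) K :=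
      continuousAt_const.sub h1
    have h4 : ContinuousAt (fun K' => F K' 1 / (1 - xf μ β lam (zb K'))) K :=
      (hfcont K hK).div h3 (ne_of_gt (hden K hK))
    exact (((continuousAt_const.mul h4)).mul h2).sub continuousAt_id
  -- positivity of I Z
  have hIZ : 0 < Ifun μ Z := Ifun_pos μ hμ.finite_mean Z hZpos (hμ.lt_one Z)
  have hInonneg : ∀ z, 0 ≤ Ifun μ z := Ifun_nonneg μ hμ.supp hμ.finite_mean
  have hIanti : Antitone (Ifun μ) := Ifun_anti μ hμ.supp hμ.finite_mean
  set M : ℝ := ((nu μ) Set.univ).toReal with hMdef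
  have hIleM : ∀ z, Ifun μ z ≤ M := Ifun_le μ hμ.supp hμ.finite_mean
  -- G positive for small K
  obtain ⟨K1, hK1pos, hGK1⟩ : ∃ K1 : ℝ, 0 < K1 ∧
      0 < β * lam * (F K1 1 / (1 - xf μ β lam (zb K1))) * Ifun μ (zb K1) - K1 := by
    have hRload : 0 < β * lam * Ifun μ Z := mul_pos hbl hIZ
    set R : ℝ := 1/(β * lam * Ifun μ Z) + 1 with hRdef
    obtain ⟨K1, hRK1, hK1pos⟩ :=
      ((hInada.eventually (eventually_gt_atTop R)).and self_mem_nhdsWithin).exists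
    have hK1pos : 0 < K1 := hK1pos
    refine ⟨K1, hK1pos, ?_⟩
    have hx1 := hzbx K1 hK1pos
    have hd1 := hden K1 hK1pos
    have hzZ := hzbZ K1 hK1pos
    have hI1 : Ifun μ Z ≤ Ifun μ (zb K1) := hIanti hzZ
    have hf1 := hfpos K1 hK1pos
    have h5 : F K1 1 ≤ F K1 1 / (1 - xf μ β lam (zb K1)) := by
      rw [le_div_iff₀ hd1]; nlinarith
    have hFgt : R * K1 < F K1 1 := by
      have := (lt_div_iff₀ hK1pos).1 hRK1
      linarith
    have hRIZ : β * lam * Ifun μ Z * R = 1 + β * lam * Ifun μ Z := by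
      rw [hRdef]; field_simp
    have a1 : 0 ≤ (F K1 1 / (1 - xf μ β lam (zb K1)) - F K1 1) * Ifun μ (zb K1) :=
      mul_nonneg (by linarith) (hInonneg _)
    have a2 : 0 ≤ F K1 1 * (Ifun μ (zb K1) - Ifun μ Z) := mul_nonneg hf1.le (by linarith)
    have s1 : β * lam * F K1 1 * Ifun μ Z
        ≤ β * lam * (F K1 1 / (1 - xf μ β lam (zb K1))) * Ifun μ (zb K1) := by
      linarith [mul_nonneg hbl.le a1, mul_nonneg hbl.le a2]
    have s3 : β * lam * Ifun μ Z * (R * K1) < β * lam * Ifun μ Z * F K1 1 :=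
      mul_lt_mul_of_pos_left hFgt hRload
    have s4 : β * lam * Ifun μ Z * (R * K1) = (1 + β * lam * Ifun μ Z) * K1 := by
      rw [← mul_assoc, hRIZ]
    have s5 : 0 < K1 * (β * lam * Ifun μ Z) := mul_pos hK1pos hRload
    linarith [s1, s3, s4, s5]
  -- δ > 0 from lam < lamBar
  set T : ℝ := ∫ z, max (m * z - 1) 0 ∂μ with hTdef
  have hTeq : T = m * Ifun μ (1/m) - (1 - Phi μ (1/m)) := T_eq μ hμ.finite_mean m hm
  have hTpos : 0 < T := T_pos μ hμ.finite_mean m hm (hμ.lt_one _)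
  set δ : ℝ := (1 - β*(lam * Phi μ (1/m) + 1 - lam)) - β*lam*(m*Ifun μ (1/m)) with hδdef
  have hδpos : 0 < δ := by
    have h1 : lam * T < (1 - β)/β := by
      have h2 := hlt
      rw [lamBar] at h2
      have h3 : lam * T < ((1 - β) / β) * T⁻¹ * T := by
        exact mul_lt_mul_of_pos_right h2 hTpos
      rwa [mul_assoc, inv_mul_cancel₀ (ne_of_gt hTpos), mul_one] at h3
    have h4 : β * (lam * T) < 1 - β := by
      have h5 := mul_lt_mul_of_pos_left h1 hβ0
      have h6 : β * ((1 - β) / β) = 1 - β := by field_simp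
      rwa [h6] at h5
    have h6 : δ = (1 - β) - β * (lam * T) := by rw [hδdef, hTeq]; ring
    linarith
  -- G negative for large K
  obtain ⟨K2, hK2gt, hGK2⟩ : ∃ K2 : ℝ, K1 < K2 ∧
      β * lam * (F K2 1 / (1 - xf μ β lam (zb K2))) * Ifun μ (zb K2) - K2 < 0 := by
    have hM0 : 0 ≤ M := ENNReal.toReal_nonneg
    have hden2 : 0 < β * lam * M + 1 := by positivity
    set δ' : ℝ := δ / (β * lam * M + 1) with hδ'def
    have hδ'0 : 0 < δ' := div_pos hδpos hden2
    have hev2 : ∀ᶠ K in atTop, |F K 1 / K - m| < δ' := by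
      have := Metric.tendsto_nhds.1 hF.lim_avg δ' hδ'0
      filter_upwards [this] with K hK
      rwa [Real.dist_eq] at hK
    obtain ⟨K2, hK2a, hK2b⟩ := (hev2.and (eventually_gt_atTop (max K1 1))).exists
    have hK2pos : 0 < K2 := lt_of_lt_of_le one_pos (le_trans (le_max_right K1 1) hK2b.le)
    have hK2gt : K1 < K2 := lt_of_le_of_lt (le_max_left K1 1) hK2b
    refine ⟨K2, hK2gt, ?_⟩
    have hx2 := hzbx K2 hK2pos
    have hd2 := hden K2 hK2pos
    have hJ := key_J μ hμ.finite_mean β lam m hβ0 hlam hm (zb K2)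
    have hK2ne : K2 ≠ 0 := ne_of_gt hK2pos
    set q : ℝ := F K2 1 / K2 with hqdef
    have hq : F K2 1 = K2 * q := by rw [hqdef]; field_simp
    have e1 : (q - m) * Ifun μ (zb K2) ≤ δ' * Ifun μ (zb K2) :=
      mul_le_mul_of_nonneg_right (le_trans (le_abs_self _) hK2a.le) (hInonneg _)
    have e2 : δ' * Ifun μ (zb K2) ≤ δ' * M :=
      mul_le_mul_of_nonneg_left (hIleM _) hδ'0.le
    have b1 : β * lam * ((q - m) * Ifun μ (zb K2)) ≤ β * lam * (δ' * M) :=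
      mul_le_mul_of_nonneg_left (e1.trans e2) hbl.le
    have b2 : β * lam * (δ' * M) < δ := by
      have heq : β * lam * (δ' * M) = δ * (β * lam * M) / (β * lam * M + 1) := by
        rw [hδ'def]; ring
      rw [heq, div_lt_iff₀ hden2]
      nlinarith
    have b3 : β * lam * (m * Ifun μ (zb K2)) ≤ (1 - xf μ β lam (zb K2)) - δ := by
      simp only [xf]
      rw [← hδdef] at hJ
      linarith [hJ]
    have b4 : β * lam * (q * Ifun μ (zb K2)) < 1 - xf μ β lam (zb K2) := by
      have : β * lam * (q * Ifun μ (zb K2)) = β * lam * (m * Ifun μ (zb K2))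
          + β * lam * ((q - m) * Ifun μ (zb K2)) := by ring
      rw [this]
      linarith
    have b5 : β * lam * F K2 1 * Ifun μ (zb K2) < K2 * (1 - xf μ β lam (zb K2)) := by
      rw [hq]
      calc β * lam * (K2 * q) * Ifun μ (zb K2)
          = K2 * (β * lam * (q * Ifun μ (zb K2))) := by ring
        _ < K2 * (1 - xf μ β lam (zb K2)) := by
            exact mul_lt_mul_of_pos_left b4 hK2pos
    have heq2 : β * lam * (F K2 1 / (1 - xf μ β lam (zb K2))) * Ifun μ (zb K2)
        = β * lam * F K2 1 * Ifun μ (zb K2) / (1 - xf μ β lam (zb K2)) := by ring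
    rw [sub_neg, heq2, div_lt_iff₀ hd2]
    linarith
  -- IVT for G
  have hGconton : ContinuousOn (fun K =>
      β * lam * (F K 1 / (1 - xf μ β lam (zb K))) * Ifun μ (zb K) - K) (Set.Icc K1 K2) := by
    intro K hK
    exact (hGcont K (lt_of_lt_of_le hK1pos hK.1)).continuousWithinAt
  obtain ⟨Ks, hKsmem, hGKs⟩ := intermediate_value_Icc' hK2gt.le hGconton
    ⟨hGK2.le, hGK1.le⟩
  have hKspos : 0 < Ks := lt_of_lt_of_le hK1pos hKsmem.1
  refine ⟨Ks, zb Ks, hKspos, ?_, ?_, ?_⟩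
  · -- Phi > 1 - 1/lam
    have hx := hzbx Ks hKspos
    simp only [xf] at hx
    have hinv : lam * (1/lam) = 1 := by field_simp
    nlinarith [Phi_nonneg μ (zb Ks)]
  · -- the K equation
    have hG0 : β * lam * (F Ks 1 / (1 - xf μ β lam (zb Ks))) * Ifun μ (zb Ks) - Ks = 0 := hGKs
    rw [Wfun]
    have hIeq : Ifun μ (zb Ks) = ∫ z in Set.Ioi (zb Ks), z ∂μ := rfl
    rw [← hIeq]
    simp only [xf] at hG0
    linarith
  · -- the zb equation
    have hroot := hzb0 Ks hKspos
    have hx := hzbx Ks hKspos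
    have hd := hden Ks hKspos
    have hfp := hfpos Ks hKspos
    have hkp := hfkpos Ks hKspos
    simp only [hf, Af] at hroot
    simp only [xf] at hroot hx hd
    have hPpos : 0 < Pfun μ β lam F Ks (zb Ks) := by
      rw [Pfun]
      exact div_pos (mul_pos hx hfp) hd
    have hne : FK Ks 1 * Pfun μ β lam F Ks (zb Ks) ≠ 0 := ne_of_gt (mul_pos hkp hPpos)
    rw [eq_div_iff hne, Pfun]
    field_simp
    linear_combination hroot
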